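/- Let ab be an edge of a finite simple graph G. With N_{a\b} = N_a \ {b}, S_{a\b} = N_{a\b} ∪ {a}, N_{b\a} = N_b \ {a}, S_{b\a} = N_{b\a} ∪ {b}, we have α(N_{a\b}, S_{b\a}) = α(N_{b\a}, S_{a\b}), i.e., the edge count in 'scheme 2' is symmetric in a and b. -/

import Mathlib

open Finset

/-- scheme 2 edge count is symmetric in a and b:
    α(N_{a\b}, S_{b\a}) = α(N_{b\a}, S_{a\b}). -/
theorem alpha_scheme2_symm {V : Type*} [Fintype V] [DecidableEq V]
    (G : SimpleGraph V) [DecidableRel G.Adj] (a b : V) (hab : G.Adj a b) :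
    (∑ x ∈ G.neighborFinset a \ {b}, ∑ y ∈ insert b (G.neighborFinset b \ {a}),
        (if G.Adj x y then (1 : ℕ) else 0)) =
      (∑ x ∈ G.neighborFinset b \ {a}, ∑ y ∈ insert a (G.neighborFinset a \ {b}),
        (if G.Adj x y then (1 : ℕ) else 0)) := by
  have hb : b ∉ G.neighborFinset b \ ({a} : Finset V) := by
    simp [SimpleGraph.mem_neighborFinset]
  have ha : a ∉ G.neighborFinset a \ ({b} : Finset V) := by
    simp [SimpleGraph.mem_neighborFinset]
  simp only [Finset.sum_add_distrib, Finset.sum_insert hb, Finset.sum_insert ha]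
  have h1 : (∑ x ∈ G.neighborFinset a \ {b}, (if G.Adj x b then (1 : ℕ) else 0))
      = (∑ x ∈ G.neighborFinset b \ {a}, (if G.Adj x a then (1 : ℕ) else 0)) := by
    rw [Finset.sum_boole, Finset.sum_boole]
    norm_cast; congr 1
    ext x
    simp only [Finset.mem_filter, Finset.mem_sdiff, Finset.mem_singleton,
      SimpleGraph.mem_neighborFinset]
    constructor
    · rintro ⟨⟨h1, -⟩, h2⟩
      exact ⟨⟨h2.symm, fun h => G.loopless.irrefl a (h ▸ h1)⟩, h1.symm⟩
    · rintro ⟨⟨h1, -⟩, h2⟩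
      exact ⟨⟨h2.symm, fun h => G.loopless.irrefl b (h ▸ h1)⟩, h1.symm⟩
  have h2 : (∑ x ∈ G.neighborFinset a \ {b}, ∑ y ∈ G.neighborFinset b \ {a},
        (if G.Adj x y then (1 : ℕ) else 0))
      = (∑ x ∈ G.neighborFinset b \ {a}, ∑ y ∈ G.neighborFinset a \ {b},
        (if G.Adj x y then (1 : ℕ) else 0)) := by
    rw [Finset.sum_comm]
    apply Finset.sum_congr rfl
    intro x _
    apply Finset.sum_congr rfl
    intro y _
    simp [SimpleGraph.adj_comm]
  omega
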